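/- Let u, v, w be finite words over an alphabet Σ with u and w nonempty. If the bi-infinite word formed by u^{\overline{ω}} v w^{ω} (i.e., ... u u v w w ...) satisfies that u v w^2 occurs as a factor of u'^2 v' w'^2 where |u| = |u'| = |v| = |v'| = |w| = |w'| > 0, then the ω̄-ω words u^{\overline{ω}} v w^{ω} and u'^{\overline{ω}} v' w'^{ω} are isomorphic as colored linear orders. More precisely: for finite words u₁,v₁,w₁,u₂,v₂,w₂ all of the same positive length, u₁^{\overline{ω}} v₁ w₁^{ω} = u₂^{\overline{ω}} v₂ w₂^{ω} if and only if one of the following holds: (1) u₂v₂w₂² is a factor of u₁²v₁w₁²; (2) u₁v₁w₁² is a factor of u₂²v₂w₂²; (3) v₁ = w₁, u₂ = v₂, and u₂w₂² is a factor of u₁²w₁²; (4) u₁ = v₁, v₂ = w₂, and u₁w₁² is a factor of u₂²w₂². -/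

import Mathlib

/-- The bi-infinite word `u^{ω̄} v w^{ω}` (i.e. `⋯ u u v w w ⋯`), as a `Σ`-coloring
of the linear order `ℤ`: negative positions are colored by periodic repetition of
`u` to the left, positions `0,…,|v|-1` by `v`, and the remaining positions by
periodic repetition of `w` to the right. -/
def biWord {S : Type*} [Inhabited S] (u v w : List S) : ℤ → S := fun i =>
  if i < 0 then u.getD ((i % (u.length : ℤ)).toNat) default
  else if i < (v.length : ℤ) then v.getD i.toNat default
  else w.getD (((i - (v.length : ℤ)) % (w.length : ℤ)).toNat) default

/-- `x` is a factor of `y`. -/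
def IsFactor {S : Type*} (x y : List S) : Prop := ∃ p s : List S, y = p ++ x ++ s

namespace BiinfAux

lemma emod_eq_shift {i t : ℤ} (n : ℤ) (h0 : 0 ≤ i + t * n) (h1 : i + t * n < n) :
    i % n = i + t * n := by
  have h2 : i % n = (i + t * n) % n := by
    conv_lhs => rw [show i = i + t * n + n * (-t) by ring]
    rw [Int.add_mul_emod_self_left]
  rw [h2, Int.emod_eq_of_lt h0 h1]

variable {S : Type*} [Inhabited S] {n : ℕ} {u v w : List S}

lemma ext_of_getD {x y : List S} (hx : x.length = n) (hy : y.length = n)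
    (h : ∀ j, j < n → x.getD j default = y.getD j default) : x = y := by
  apply List.ext_getElem (by omega)
  intro i h1 h2
  have := h i (by omega)
  rwa [List.getD_eq_getElem x default h1, List.getD_eq_getElem y default h2] at this

lemma bw_v (hv : v.length = n) {i : ℤ} (h0 : 0 ≤ i) (h1 : i < n) :
    biWord u v w i = v.getD i.toNat default := by
  simp only [biWord, hv]
  rw [if_neg (by omega), if_pos (by omega)]

lemma bw_w1 (hv : v.length = n) (hw : w.length = n) {i : ℤ} (h0 : (n:ℤ) ≤ i) (h1 : i < 2*n) :
    biWord u v w i = w.getD (i - n).toNat default := by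
  simp only [biWord, hv, hw]
  rw [if_neg (by omega), if_neg (by omega)]
  have h2 : (i - (n:ℤ)) % n = i - n := by
    have := emod_eq_shift (i := i - (n:ℤ)) (t := 0) (n := n) (by omega) (by omega)
    simpa using this
  rw [h2]

lemma bw_w2 (hv : v.length = n) (hw : w.length = n) {i : ℤ} (h0 : 2*(n:ℤ) ≤ i) (h1 : i < 3*n) :
    biWord u v w i = w.getD (i - 2*n).toNat default := by
  simp only [biWord, hv, hw]
  rw [if_neg (by omega), if_neg (by omega)]
  have h2 : (i - (n:ℤ)) % n = i - 2*n := by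
    have := emod_eq_shift (i := i - (n:ℤ)) (t := -1) (n := n) (by omega) (by omega)
    rw [this]; try ring
  rw [h2]

lemma bw_u1 (hu : u.length = n) {i : ℤ} (h0 : -(n:ℤ) ≤ i) (h1 : i < 0) :
    biWord u v w i = u.getD (i + n).toNat default := by
  simp only [biWord, hu]
  rw [if_pos (by omega)]
  have h2 : i % (n:ℤ) = i + n := by
    have := emod_eq_shift (i := i) (t := 1) (n := (n:ℤ)) (by omega) (by omega)
    rw [this]; try ring
  rw [h2]

lemma bw_u2 (hu : u.length = n) {i : ℤ} (h0 : -(2*(n:ℤ)) ≤ i) (h1 : i < -(n:ℤ)) :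
    biWord u v w i = u.getD (i + 2*n).toNat default := by
  simp only [biWord, hu]
  rw [if_pos (by omega)]
  have h2 : i % (n:ℤ) = i + 2*n := by
    have := emod_eq_shift (i := i) (t := 2) (n := (n:ℤ)) (by omega) (by omega)
    rw [this]; try ring
  rw [h2]

lemma bw_per_up (hv : v.length = n) (hw : w.length = n) {i : ℤ} (h : (n:ℤ) ≤ i) :
    biWord u v w (i + n) = biWord u v w i := by
  simp only [biWord, hv, hw]
  rw [if_neg (by omega), if_neg (by omega), if_neg (by omega), if_neg (by omega)]
  have : i + (n:ℤ) - n = (i - n) + n * 1 := by ring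
  rw [this, Int.add_mul_emod_self_left]

lemma bw_per_dn (hu : u.length = n) {i : ℤ} (h : i + n < 0) :
    biWord u v w (i + n) = biWord u v w i := by
  simp only [biWord, hu]
  rw [if_pos (by omega), if_pos (by omega)]
  have : i % (n:ℤ) = (i + n) % n := by
    conv_lhs => rw [show i = (i + (n:ℤ)) + n * (-1) by ring]
    rw [Int.add_mul_emod_self_left]
  rw [this]

lemma bw_per_up0 (hv : v.length = n) (hw : w.length = n) (hvw : v = w) {i : ℤ} (h : 0 ≤ i) :
    biWord u v w (i + n) = biWord u v w i := by
  rcases le_or_gt (n:ℤ) i with h' | h'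
  · exact bw_per_up hv hw h'
  · rw [bw_w1 hv hw (i := i + n) (by omega) (by omega), bw_v hv h h', hvw]
    congr 1 <;> omega

lemma bw_per_dn_n (hu : u.length = n) (hv : v.length = n) (huv : u = v) {i : ℤ} (h : i < 0) :
    biWord u v w (i + n) = biWord u v w i := by
  rcases lt_or_ge (i + (n:ℤ)) 0 with h' | h'
  · exact bw_per_dn hu h'
  · rw [bw_v hv h' (by omega)]
    rw [show biWord u v w i = u.getD ((i % n).toNat) default from by
      simp only [biWord, hu]; rw [if_pos h]]
    have h2 : i % (n:ℤ) = i + n := by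
      have := emod_eq_shift (i := i) (t := 1) (n := (n:ℤ)) (by omega) (by omega)
      rw [this]; try ring
    rw [h2, huv]

lemma bw_full (hu : u.length = n) (hv : v.length = n) (hw : w.length = n)
    (huv : u = v) (hvw : v = w) (i : ℤ) :
    biWord u v w i = w.getD ((i % n).toNat) default := by
  simp only [biWord, hu, hv, hw]
  split_ifs with h1 h2
  · rw [huv, hvw]
  · rw [hvw]
    congr 2
    rw [Int.emod_eq_of_lt (by omega) (by omega)]
  · congr 2
    conv_rhs => rw [show i = (i - (n:ℤ)) + n * 1 by ring]
    rw [Int.add_mul_emod_self_left]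


/-! ### Window lemmas -/

lemma bw_W5 (hn : 0 < n) (hu : u.length = n) (hv : v.length = n) (hw : w.length = n)
    (j : ℕ) (hj : j < 5*n) :
    (u ++ u ++ v ++ w ++ w).getD j default = biWord u v w ((j:ℤ) - 2*n) := by
  have l4 : (u ++ u ++ v ++ w).length = 4*n := by
    simp only [List.length_append, hu, hv, hw]; omega
  have l3 : (u ++ u ++ v).length = 3*n := by
    simp only [List.length_append, hu, hv]; omega
  have l2 : (u ++ u).length = 2*n := by
    simp only [List.length_append, hu]; omega
  by_cases c1 : j < n
  · rw [List.getD_append _ _ _ _ (by rw [l4]; omega),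
        List.getD_append _ _ _ _ (by rw [l3]; omega),
        List.getD_append _ _ _ _ (by rw [l2]; omega),
        List.getD_append _ _ _ _ (by rw [hu]; omega),
        bw_u2 hu (by omega) (by omega)]
    congr 1 <;> omega
  by_cases c2 : j < 2*n
  · rw [List.getD_append _ _ _ _ (by rw [l4]; omega),
        List.getD_append _ _ _ _ (by rw [l3]; omega),
        List.getD_append _ _ _ _ (by rw [l2]; omega),
        List.getD_append_right _ _ _ _ (by rw [hu]; omega),
        bw_u1 hu (by omega) (by omega)]
    rw [hu]; congr 1 <;> omega
  by_cases c3 : j < 3*n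
  · rw [List.getD_append _ _ _ _ (by rw [l4]; omega),
        List.getD_append _ _ _ _ (by rw [l3]; omega),
        List.getD_append_right _ _ _ _ (by rw [l2]; omega),
        bw_v hv (by omega) (by omega)]
    rw [l2]; congr 1 <;> omega
  by_cases c4 : j < 4*n
  · rw [List.getD_append _ _ _ _ (by rw [l4]; omega),
        List.getD_append_right _ _ _ _ (by rw [l3]; omega),
        bw_w1 hv hw (by omega) (by omega)]
    rw [l3]; congr 1 <;> omega
  · rw [List.getD_append_right _ _ _ _ (by rw [l4]; omega),
        bw_w2 hv hw (by omega) (by omega)]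
    rw [l4]; congr 1 <;> omega

lemma bw_W4 (hn : 0 < n) (hu : u.length = n) (hv : v.length = n) (hw : w.length = n)
    (j : ℕ) (hj : j < 4*n) :
    (u ++ v ++ w ++ w).getD j default = biWord u v w ((j:ℤ) - n) := by
  have l3 : (u ++ v ++ w).length = 3*n := by
    simp only [List.length_append, hu, hv, hw]; omega
  have l2 : (u ++ v).length = 2*n := by
    simp only [List.length_append, hu, hv]; omega
  by_cases c1 : j < n
  · rw [List.getD_append _ _ _ _ (by rw [l3]; omega),
        List.getD_append _ _ _ _ (by rw [l2]; omega),
        List.getD_append _ _ _ _ (by rw [hu]; omega),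
        bw_u1 hu (by omega) (by omega)]
    congr 1 <;> omega
  by_cases c2 : j < 2*n
  · rw [List.getD_append _ _ _ _ (by rw [l3]; omega),
        List.getD_append _ _ _ _ (by rw [l2]; omega),
        List.getD_append_right _ _ _ _ (by rw [hu]; omega),
        bw_v hv (by omega) (by omega)]
    rw [hu]; congr 1 <;> omega
  by_cases c3 : j < 3*n
  · rw [List.getD_append _ _ _ _ (by rw [l3]; omega),
        List.getD_append_right _ _ _ _ (by rw [l2]; omega),
        bw_w1 hv hw (by omega) (by omega)]
    rw [l2]; congr 1 <;> omega
  · rw [List.getD_append_right _ _ _ _ (by rw [l3]; omega),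
        bw_w2 hv hw (by omega) (by omega)]
    rw [l3]; congr 1 <;> omega

lemma bw_W4' (hn : 0 < n) (hu : u.length = n) (hv : v.length = n) (hw : w.length = n)
    (hvw : v = w) (j : ℕ) (hj : j < 4*n) :
    (u ++ u ++ w ++ w).getD j default = biWord u v w ((j:ℤ) - 2*n) := by
  have l3 : (u ++ u ++ w).length = 3*n := by
    simp only [List.length_append, hu, hw]; omega
  have l2 : (u ++ u).length = 2*n := by
    simp only [List.length_append, hu]; omega
  by_cases c1 : j < n
  · rw [List.getD_append _ _ _ _ (by rw [l3]; omega),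
        List.getD_append _ _ _ _ (by rw [l2]; omega),
        List.getD_append _ _ _ _ (by rw [hu]; omega),
        bw_u2 hu (by omega) (by omega)]
    congr 1 <;> omega
  by_cases c2 : j < 2*n
  · rw [List.getD_append _ _ _ _ (by rw [l3]; omega),
        List.getD_append _ _ _ _ (by rw [l2]; omega),
        List.getD_append_right _ _ _ _ (by rw [hu]; omega),
        bw_u1 hu (by omega) (by omega)]
    rw [hu]; congr 1 <;> omega
  by_cases c3 : j < 3*n
  · rw [List.getD_append _ _ _ _ (by rw [l3]; omega),
        List.getD_append_right _ _ _ _ (by rw [l2]; omega),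
        bw_v hv (by omega) (by omega), hvw]
    rw [l2]; congr 1 <;> omega
  · rw [List.getD_append_right _ _ _ _ (by rw [l3]; omega),
        bw_w1 hv hw (by omega) (by omega)]
    rw [l3]; congr 1 <;> omega

lemma bw_W3 (hn : 0 < n) (hu : u.length = n) (hv : v.length = n) (hw : w.length = n)
    (huv : u = v) (j : ℕ) (hj : j < 3*n) :
    (u ++ w ++ w).getD j default = biWord u v w (j:ℤ) := by
  have l2 : (u ++ w).length = 2*n := by
    simp only [List.length_append, hu, hw]; omega
  by_cases c1 : j < n
  · rw [List.getD_append _ _ _ _ (by rw [l2]; omega),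
        List.getD_append _ _ _ _ (by rw [hu]; omega),
        bw_v hv (by omega) (by omega), ← huv]
    congr 1 <;> omega
  by_cases c2 : j < 2*n
  · rw [List.getD_append _ _ _ _ (by rw [l2]; omega),
        List.getD_append_right _ _ _ _ (by rw [hu]; omega),
        bw_w1 hv hw (by omega) (by omega)]
    rw [hu]; congr 1 <;> omega
  · rw [List.getD_append_right _ _ _ _ (by rw [l2]; omega),
        bw_w2 hv hw (by omega) (by omega)]
    rw [l2]; congr 1 <;> omega

/-! ### Factor lemmas -/

lemma isFactor_of_getD (x y : List S) (p : ℕ) (hlen : p + x.length ≤ y.length)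
    (h : ∀ j, j < x.length → y.getD (p + j) default = x.getD j default) : IsFactor x y := by
  have hx : x = ((y.drop p).take x.length) := by
    apply List.ext_getElem
    · rw [List.length_take, List.length_drop]; omega
    · intro i h1 h2
      rw [List.getElem_take, List.getElem_drop]
      have := h i h1
      rw [List.getD_eq_getElem x default h1, List.getD_eq_getElem y default (by omega)] at this
      exact this.symm
  refine ⟨y.take p, y.drop (p + x.length), ?_⟩
  rw [List.append_assoc]
  conv_lhs => rw [← List.take_append_drop p y]
  congr 1
  have h2 := List.take_append_drop x.length (y.drop p)
  rw [List.drop_drop] at h2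
  rw [← hx] at h2
  exact h2.symm

lemma getD_of_isFactor (x y pre suf : List S) (hy : y = pre ++ x ++ suf) (j : ℕ)
    (hj : j < x.length) :
    y.getD (pre.length + j) default = x.getD j default := by
  subst hy
  rw [List.append_assoc, List.getD_append_right _ _ _ _ (Nat.le_add_right _ _),
      Nat.add_sub_cancel_left, List.getD_append _ _ _ _ hj]


/-! ### Order isomorphisms of ℤ are translations -/

lemma ziso (e : ℤ ≃o ℤ) : ∀ i : ℤ, e i = i + e 0 := by
  have key : ∀ i : ℤ, e (i + 1) = e i + 1 := by
    intro i
    have h1 : e i < e (i + 1) := e.strictMono (by omega)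
    by_contra hne
    have h3 : e (e.symm (e i + 1)) = e i + 1 := e.apply_symm_apply _
    have h4 : i < e.symm (e i + 1) := by
      rw [← e.lt_iff_lt, h3]; omega
    have h5 : e.symm (e i + 1) < i + 1 := by
      rw [← e.lt_iff_lt, h3]; omega
    omega
  intro i
  induction i using Int.induction_on with
  | zero => omega
  | succ i ih => rw [key (i:ℤ), ih]; ring
  | pred i ih =>
    have h2 := key (-(i:ℤ) - 1)
    rw [show -(i:ℤ) - 1 + 1 = -(i:ℤ) by ring, ih] at h2
    omega

/-! ### Extension lemmas -/

lemma ext_up {f g : ℤ → S} {k m b cf cg : ℤ} (hm : 0 < m)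
    (hfu : ∀ i, cf ≤ i → f (i + m) = f i)
    (hgu : ∀ j, cg ≤ j → g (j + m) = g j)
    (hb : cf + m ≤ b) (hbk : cg + m ≤ b + k)
    (hwin : ∀ i, b - m ≤ i → i < b → g (i + k) = f i) :
    ∀ i, b - m ≤ i → g (i + k) = f i := by
  have key : ∀ q : ℕ, ∀ i, b - m ≤ i → i < b → g (i + q * m + k) = f (i + q * m) := by
    intro q
    induction q with
    | zero => intro i h1 h2; simpa using hwin i h1 h2
    | succ q ih =>
      intro i h1 h2
      have hmn : 0 ≤ (q:ℤ) * m := mul_nonneg (Int.natCast_nonneg q) hm.le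
      have e1 : f (i + ((q:ℕ)+1 : ℕ) * m) = f (i + (q:ℤ) * m) := by
        rw [show i + (((q:ℕ)+1 : ℕ) : ℤ) * m = (i + (q:ℤ)*m) + m by push_cast; ring]
        exact hfu _ (by linarith)
      have e2 : g (i + ((q:ℕ)+1 : ℕ) * m + k) = g (i + (q:ℤ) * m + k) := by
        rw [show i + (((q:ℕ)+1 : ℕ) : ℤ) * m + k = (i + (q:ℤ)*m + k) + m by push_cast; ring]
        exact hgu _ (by linarith)
      rw [e1, e2]
      exact ih i h1 h2
  intro i hi
  obtain ⟨q, r, hq0, hr0, hr1, hqr⟩ : ∃ q r : ℤ, 0 ≤ q ∧ 0 ≤ r ∧ r < m ∧ i - (b - m) = m * q + r :=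
    ⟨(i - (b-m))/m, (i - (b-m))%m, Int.ediv_nonneg (by omega) hm.le,
      Int.emod_nonneg _ (by omega), Int.emod_lt_of_pos _ hm, (Int.mul_ediv_add_emod _ _).symm⟩
  have hk := key q.toNat (b - m + r) (by omega) (by omega)
  have eq1 : b - m + r + (q.toNat : ℤ) * m = i := by
    rw [Int.toNat_of_nonneg hq0]; linarith
  rw [eq1] at hk
  exact hk

lemma ext_dn {f g : ℤ → S} {k m a df dg : ℤ} (hm : 0 < m)
    (hfd : ∀ i, i + m < df → f (i + m) = f i)
    (hgd : ∀ j, j + m < dg → g (j + m) = g j)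
    (ha : a + m ≤ df) (hak : a + m + k ≤ dg)
    (hwin : ∀ i, a ≤ i → i < a + m → g (i + k) = f i) :
    ∀ i, i < a + m → g (i + k) = f i := by
  have key : ∀ q : ℕ, ∀ i, a ≤ i → i < a + m → g (i - q * m + k) = f (i - q * m) := by
    intro q
    induction q with
    | zero => intro i h1 h2; simpa using hwin i h1 h2
    | succ q ih =>
      intro i h1 h2
      have hmn : 0 ≤ (q:ℤ) * m := mul_nonneg (Int.natCast_nonneg q) hm.le
      have e1 : f (i - ((q:ℕ)+1 : ℕ) * m) = f (i - (q:ℤ) * m) := by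
        have := hfd (i - ((q:ℕ)+1 : ℕ) * m) (by push_cast; linarith)
        rw [show i - (((q:ℕ)+1 : ℕ) : ℤ) * m + m = i - (q:ℤ)*m by push_cast; ring] at this
        exact this.symm
      have e2 : g (i - ((q:ℕ)+1 : ℕ) * m + k) = g (i - (q:ℤ) * m + k) := by
        have := hgd (i - ((q:ℕ)+1 : ℕ) * m + k) (by push_cast; linarith)
        rw [show i - (((q:ℕ)+1 : ℕ) : ℤ) * m + k + m = i - (q:ℤ)*m + k by push_cast; ring] at this
        exact this.symm
      rw [e1, e2]
      exact ih i h1 h2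
  intro i hi
  obtain ⟨q, r, hq0, hr0, hr1, hqr⟩ : ∃ q r : ℤ, q ≤ 0 ∧ 0 ≤ r ∧ r < m ∧ i - a = m * q + r := by
    refine ⟨(i - a)/m, (i - a)%m, ?_, Int.emod_nonneg _ (by omega),
      Int.emod_lt_of_pos _ hm, (Int.mul_ediv_add_emod _ _).symm⟩
    by_contra hq
    push_neg at hq
    have h1 : (1:ℤ) ≤ (i - a)/m := hq
    have h2 : m * 1 ≤ m * ((i-a)/m) := mul_le_mul_of_nonneg_left h1 hm.le
    have h3 := Int.mul_ediv_add_emod (i - a) m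
    have h4 : 0 ≤ (i - a) % m := Int.emod_nonneg _ (by omega)
    omega
  have hk := key (-q).toNat (a + r) (by omega) (by omega)
  have eq1 : a + r - ((-q).toNat : ℤ) * m = i := by
    rw [Int.toNat_of_nonneg (by omega)]; linarith
  rw [eq1] at hk
  exact hk

lemma ext_all {f g : ℤ → S} {k m a b cf cg df dg : ℤ} (hm : 0 < m)
    (hfu : ∀ i, cf ≤ i → f (i + m) = f i)
    (hfd : ∀ i, i + m < df → f (i + m) = f i)
    (hgu : ∀ j, cg ≤ j → g (j + m) = g j)
    (hgd : ∀ j, j + m < dg → g (j + m) = g j)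
    (hba : a + m ≤ b) (hb : cf + m ≤ b) (hbk : cg + m ≤ b + k)
    (ha : a + m ≤ df) (hak : a + m + k ≤ dg)
    (hwin : ∀ i, a ≤ i → i < b → g (i + k) = f i) :
    ∀ i, g (i + k) = f i := by
  intro i
  rcases le_or_gt (b - m) i with h | h
  · exact ext_up hm hfu hgu hb hbk (fun i h1 h2 => hwin i (by omega) h2) i h
  rcases lt_or_ge i (a + m) with h' | h'
  · exact ext_dn hm hfd hgd ha hak (fun i h1 h2 => hwin i h1 (by omega)) i h'
  · exact hwin i (by omega) (by omega)


/-! ### Forward direction -/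

variable {u' v' w' : List S}

lemma vw_of (hn : 0 < n) (hu : u.length = n) (hv : v.length = n) (hw : w.length = n)
    (hv' : v'.length = n) (hw' : w'.length = n)
    {k : ℤ} (hk : (n:ℤ) ≤ k)
    (h : ∀ i, biWord u' v' w' (i + k) = biWord u v w i) : v = w := by
  apply ext_of_getD hv hw
  intro j hjn
  have e1 : v.getD j default = biWord u' v' w' ((j:ℤ) + k) := by
    rw [h, bw_v hv (by omega) (by omega)]
    simp
  have e2 : w.getD j default = biWord u' v' w' (((n:ℤ) + j) + k) := by
    rw [h, bw_w1 hv hw (by omega) (by omega)]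
    congr 1; omega
  rw [e1, e2, show ((n:ℤ) + j) + k = ((j:ℤ) + k) + n by ring,
    bw_per_up hv' hw' (by omega)]

lemma u'v'_of (hn : 0 < n) (hu : u.length = n)
    (hu' : u'.length = n) (hv' : v'.length = n)
    {k : ℤ} (hk : (n:ℤ) ≤ k)
    (h : ∀ i, biWord u' v' w' (i + k) = biWord u v w i) : u' = v' := by
  apply ext_of_getD hu' hv'
  intro j hjn
  have e1 : u'.getD j default = biWord u' v' w' ((j:ℤ) - n) := by
    rw [bw_u1 hu' (by omega) (by omega)]
    congr 1; omega
  have e2 : v'.getD j default = biWord u' v' w' (j:ℤ) := by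
    rw [bw_v hv' (by omega) (by omega)]
    simp
  rw [e1, e2]
  have e3 := h ((j:ℤ) - n - k)
  rw [show (j:ℤ) - n - k + k = (j:ℤ) - n by ring] at e3
  have e4 := h ((j:ℤ) - k)
  rw [show (j:ℤ) - k + k = (j:ℤ) by ring] at e4
  rw [e3, e4]
  have e5 := bw_per_dn (u := u) (v := v) (w := w) hu (i := (j:ℤ) - n - k) (by omega)
  rw [show (j:ℤ) - n - k + n = (j:ℤ) - k by ring] at e5
  exact e5.symm

lemma uw_of (hn : 0 < n) (hu : u.length = n) (hv : v.length = n) (hw : w.length = n)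
    (hv' : v'.length = n) (hw' : w'.length = n)
    {k : ℤ} (hk : 2*(n:ℤ) ≤ k)
    (h : ∀ i, biWord u' v' w' (i + k) = biWord u v w i) : u = w := by
  apply ext_of_getD hu hw
  intro j hjn
  have e1 : u.getD j default = biWord u' v' w' (((j:ℤ) - n) + k) := by
    rw [h, bw_u1 hu (by omega) (by omega)]
    congr 1; omega
  have e2 : w.getD j default = biWord u' v' w' (((n:ℤ) + j) + k) := by
    rw [h, bw_w1 hv hw (by omega) (by omega)]
    congr 1; omega
  rw [e1, e2]
  have p1 := bw_per_up (u := u') (v := v') (w := w') hv' hw' (i := (j:ℤ) - n + k) (by omega)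
  have p2 := bw_per_up (u := u') (v := v') (w := w') hv' hw' (i := (j:ℤ) + k) (by omega)
  rw [show (j:ℤ) - n + k + n = (j:ℤ) + k by ring] at p1
  rw [show (j:ℤ) + k + n = ((n:ℤ) + j) + k by ring] at p2
  rw [← p1, p2]

lemma fwd_low (hn : 0 < n) (hu : u.length = n) (hv : v.length = n) (hw : w.length = n)
    (hu' : u'.length = n) (hv' : v'.length = n) (hw' : w'.length = n)
    {k : ℤ} (hk0 : 0 ≤ k) (hk1 : k ≤ (n:ℤ))
    (h : ∀ i, biWord u' v' w' (i + k) = biWord u v w i) :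
    IsFactor (u' ++ v' ++ w' ++ w') (u ++ u ++ v ++ w ++ w) := by
  apply isFactor_of_getD _ _ ((n:ℤ) - k).toNat
  · rw [List.length_append, List.length_append, List.length_append, List.length_append,
      List.length_append, List.length_append, List.length_append,
      hu, hv, hw, hu', hv', hw']
    omega
  · intro j hj
    have hj4 : j < 4*n := by
      rw [List.length_append, List.length_append, List.length_append, hu', hv', hw'] at hj
      omega
    have hp : ((((n:ℤ) - k).toNat : ℕ) : ℤ) = (n:ℤ) - k := Int.toNat_of_nonneg (by omega)
    rw [bw_W5 hn hu hv hw _ (by omega), bw_W4 hn hu' hv' hw' j hj4]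
    rw [← h ((((n:ℤ) - k).toNat + j : ℕ) - 2*(n:ℤ))]
    congr 1
    push_cast
    omega

lemma fwd_mid (hn : 0 < n) (hu : u.length = n) (hv : v.length = n) (hw : w.length = n)
    (hu' : u'.length = n) (hv' : v'.length = n) (hw' : w'.length = n)
    {k : ℤ} (hk1 : (n:ℤ) < k) (hk2 : k ≤ 2*(n:ℤ))
    (h : ∀ i, biWord u' v' w' (i + k) = biWord u v w i) :
    v = w ∧ u' = v' ∧ IsFactor (u' ++ w' ++ w') (u ++ u ++ w ++ w) := by
  have hvw : v = w := vw_of hn hu hv hw hv' hw' (by omega) h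
  have hu'v' : u' = v' := u'v'_of hn hu hu' hv' (by omega) h
  refine ⟨hvw, hu'v', ?_⟩
  apply isFactor_of_getD _ _ (2*(n:ℤ) - k).toNat
  · rw [List.length_append, List.length_append, List.length_append, List.length_append,
      List.length_append, hu, hw, hu', hw']
    omega
  · intro j hj
    have hj3 : j < 3*n := by
      rw [List.length_append, List.length_append, hu', hw'] at hj
      omega
    have hp : (((2*(n:ℤ) - k).toNat : ℕ) : ℤ) = 2*(n:ℤ) - k := Int.toNat_of_nonneg (by omega)
    rw [bw_W4' hn hu hv hw hvw _ (by omega), bw_W3 hn hu' hv' hw' hu'v' j hj3]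
    rw [← h (((2*(n:ℤ) - k).toNat + j : ℕ) - 2*(n:ℤ))]
    congr 1
    push_cast
    omega

lemma fwd (hn : 0 < n) (hu : u.length = n) (hv : v.length = n) (hw : w.length = n)
    (hu' : u'.length = n) (hv' : v'.length = n) (hw' : w'.length = n)
    {k : ℤ} (hk0 : 0 ≤ k)
    (h : ∀ i, biWord u' v' w' (i + k) = biWord u v w i) :
    IsFactor (u' ++ v' ++ w' ++ w') (u ++ u ++ v ++ w ++ w) ∨
      (v = w ∧ u' = v' ∧ IsFactor (u' ++ w' ++ w') (u ++ u ++ w ++ w)) := by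
  rcases le_or_gt k (n:ℤ) with hk | hk
  · exact Or.inl (fwd_low hn hu hv hw hu' hv' hw' hk0 hk h)
  rcases le_or_gt k (2*(n:ℤ)) with hk2 | hk2
  · exact Or.inr (fwd_mid hn hu hv hw hu' hv' hw' hk hk2 h)
  · have hvw : v = w := vw_of hn hu hv hw hv' hw' (by omega) h
    have huw : u = w := uw_of hn hu hv hw hv' hw' (by omega) h
    have huv : u = v := huw.trans hvw.symm
    have h9 := Int.mul_ediv_add_emod (k - ((n:ℤ)+1)) (n:ℤ)
    obtain ⟨Q, hQ⟩ : ∃ Q, Q = ((n:ℤ)) * ((k - ((n:ℤ)+1)) / (n:ℤ)) := ⟨_, rfl⟩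
    obtain ⟨r, hr⟩ : ∃ r, r = (k - ((n:ℤ)+1)) % (n:ℤ) := ⟨_, rfl⟩
    rw [← hQ, ← hr] at h9
    have hr0 : 0 ≤ r := hr ▸ Int.emod_nonneg _ (by omega)
    have hr1 : r < (n:ℤ) := hr ▸ Int.emod_lt_of_pos _ (by omega)
    refine Or.inr (fwd_mid hn hu hv hw hu' hv' hw' (k := (n:ℤ) + 1 + r) (by omega) (by omega) ?_)
    intro i
    have h6 := h (i - Q)
    rw [show i - Q + k = i + ((n:ℤ) + 1 + r) by omega] at h6
    rw [h6, bw_full hu hv hw huv hvw, bw_full hu hv hw huv hvw]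
    congr 2
    rw [show i - Q = i + (n:ℤ) * (-((k - ((n:ℤ)+1)) / (n:ℤ))) from by rw [hQ]; ring,
      Int.add_mul_emod_self_left]


/-! ### Backward direction -/

lemma bwd1 (hn : 0 < n) (hu : u.length = n) (hv : v.length = n) (hw : w.length = n)
    (hu' : u'.length = n) (hv' : v'.length = n) (hw' : w'.length = n)
    (fac : IsFactor (u' ++ v' ++ w' ++ w') (u ++ u ++ v ++ w ++ w)) :
    ∃ k : ℤ, ∀ i, biWord u' v' w' (i + k) = biWord u v w i := by
  obtain ⟨pre, suf, hy⟩ := fac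
  have hlen := congrArg List.length hy
  simp only [List.length_append, hu, hv, hw, hu', hv', hw'] at hlen
  have hp : pre.length ≤ n := by omega
  refine ⟨(n:ℤ) - pre.length, ?_⟩
  have hn' : (0:ℤ) < (n:ℤ) := by exact_mod_cast hn
  apply ext_all (f := biWord u v w) (g := biWord u' v' w') (m := (n:ℤ))
    (a := (pre.length:ℤ) - 2*n) (b := (pre.length:ℤ) + 2*n)
    (cf := (n:ℤ)) (cg := (n:ℤ)) (df := 0) (dg := 0) hn'
    (fun i hi => bw_per_up hv hw hi) (fun i hi => bw_per_dn hu hi)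
    (fun i hi => bw_per_up hv' hw' hi) (fun i hi => bw_per_dn hu' hi)
    (by omega) (by omega) (by omega) (by omega) (by omega)
  intro i h1 h2
  obtain ⟨j, hj⟩ : ∃ j : ℕ, (j:ℤ) = i - pre.length + 2*n :=
    ⟨(i - pre.length + 2*(n:ℤ)).toNat, Int.toNat_of_nonneg (by omega)⟩
  have hj4 : j < 4*n := by omega
  have e3 := getD_of_isFactor _ _ _ _ hy j
    (by rw [List.length_append, List.length_append, List.length_append, hu', hv', hw']; omega)
  rw [bw_W4 hn hu' hv' hw' j hj4, bw_W5 hn hu hv hw (pre.length + j) (by omega)] at e3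
  rw [show i + ((n:ℤ) - pre.length) = (j:ℤ) - n by omega, ← e3]
  congr 1
  push_cast
  omega

lemma bwd3 (hn : 0 < n) (hu : u.length = n) (hv : v.length = n) (hw : w.length = n)
    (hu' : u'.length = n) (hv' : v'.length = n) (hw' : w'.length = n)
    (hvw : v = w) (hu'v' : u' = v')
    (fac : IsFactor (u' ++ w' ++ w') (u ++ u ++ w ++ w)) :
    ∃ k : ℤ, ∀ i, biWord u' v' w' (i + k) = biWord u v w i := by
  obtain ⟨pre, suf, hy⟩ := fac
  have hlen := congrArg List.length hy
  simp only [List.length_append, hu, hw, hu', hw'] at hlen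
  have hp : pre.length ≤ n := by omega
  refine ⟨2*(n:ℤ) - pre.length, ?_⟩
  have hn' : (0:ℤ) < (n:ℤ) := by exact_mod_cast hn
  apply ext_all (f := biWord u v w) (g := biWord u' v' w') (m := (n:ℤ))
    (a := (pre.length:ℤ) - 2*n) (b := (pre.length:ℤ) + n)
    (cf := 0) (cg := (n:ℤ)) (df := 0) (dg := (n:ℤ)) hn'
    (fun i hi => bw_per_up0 hv hw hvw hi) (fun i hi => bw_per_dn hu hi)
    (fun i hi => bw_per_up hv' hw' hi) (fun i hi => bw_per_dn_n hu' hv' hu'v' (by omega))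
    (by omega) (by omega) (by omega) (by omega) (by omega)
  intro i h1 h2
  obtain ⟨j, hj⟩ : ∃ j : ℕ, (j:ℤ) = i - pre.length + 2*n :=
    ⟨(i - pre.length + 2*(n:ℤ)).toNat, Int.toNat_of_nonneg (by omega)⟩
  have hj3 : j < 3*n := by omega
  have e3 := getD_of_isFactor _ _ _ _ hy j
    (by rw [List.length_append, List.length_append, hu', hw']; omega)
  rw [bw_W3 hn hu' hv' hw' hu'v' j hj3, bw_W4' hn hu hv hw hvw (pre.length + j) (by omega)] at e3
  rw [show i + (2*(n:ℤ) - pre.length) = (j:ℤ) by omega, ← e3]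
  congr 1
  push_cast
  omega

/-! ### Main theorem -/

theorem main {n : ℕ} (hn : 0 < n) (u₁ v₁ w₁ u₂ v₂ w₂ : List S)
    (hu₁ : u₁.length = n) (hv₁ : v₁.length = n) (hw₁ : w₁.length = n)
    (hu₂ : u₂.length = n) (hv₂ : v₂.length = n) (hw₂ : w₂.length = n) :
    (∃ e : ℤ ≃o ℤ, ∀ i : ℤ, biWord u₂ v₂ w₂ (e i) = biWord u₁ v₁ w₁ i) ↔
      (IsFactor (u₂ ++ v₂ ++ w₂ ++ w₂) (u₁ ++ u₁ ++ v₁ ++ w₁ ++ w₁) ∨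
       IsFactor (u₁ ++ v₁ ++ w₁ ++ w₁) (u₂ ++ u₂ ++ v₂ ++ w₂ ++ w₂) ∨
       (v₁ = w₁ ∧ u₂ = v₂ ∧ IsFactor (u₂ ++ w₂ ++ w₂) (u₁ ++ u₁ ++ w₁ ++ w₁)) ∨
       (u₁ = v₁ ∧ v₂ = w₂ ∧ IsFactor (u₁ ++ w₁ ++ w₁) (u₂ ++ u₂ ++ w₂ ++ w₂))) := by
  constructor
  · rintro ⟨e, he⟩
    have hek := ziso e
    have hk : ∀ i, biWord u₂ v₂ w₂ (i + e 0) = biWord u₁ v₁ w₁ i := by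
      intro i; rw [← hek i]; exact he i
    rcases le_or_gt 0 (e 0) with h0 | h0
    · rcases fwd hn hu₁ hv₁ hw₁ hu₂ hv₂ hw₂ h0 hk with h | ⟨h1, h2, h3⟩
      · exact Or.inl h
      · exact Or.inr (Or.inr (Or.inl ⟨h1, h2, h3⟩))
    · have hk2 : ∀ j, biWord u₁ v₁ w₁ (j + (-(e 0))) = biWord u₂ v₂ w₂ j := by
        intro j
        have := hk (j + -(e 0))
        rw [show j + -(e 0) + e 0 = j by ring] at this
        exact this.symm
      rcases fwd hn hu₂ hv₂ hw₂ hu₁ hv₁ hw₁ (by omega) hk2 with h | ⟨h1, h2, h3⟩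
      · exact Or.inr (Or.inl h)
      · exact Or.inr (Or.inr (Or.inr ⟨h2, h1, h3⟩))
  · rintro (h | h | ⟨h1, h2, h3⟩ | ⟨h1, h2, h3⟩)
    · obtain ⟨k, hk⟩ := bwd1 hn hu₁ hv₁ hw₁ hu₂ hv₂ hw₂ h
      exact ⟨OrderIso.addRight k, fun i => hk i⟩
    · obtain ⟨k, hk⟩ := bwd1 hn hu₂ hv₂ hw₂ hu₁ hv₁ hw₁ h
      refine ⟨OrderIso.addRight (-k), fun i => ?_⟩
      have := hk (i + -k)
      rw [show i + -k + k = i by ring] at this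
      exact this.symm
    · obtain ⟨k, hk⟩ := bwd3 hn hu₁ hv₁ hw₁ hu₂ hv₂ hw₂ h1 h2 h3
      exact ⟨OrderIso.addRight k, fun i => hk i⟩
    · obtain ⟨k, hk⟩ := bwd3 hn hu₂ hv₂ hw₂ hu₁ hv₁ hw₁ h2 h1 h3
      refine ⟨OrderIso.addRight (-k), fun i => ?_⟩
      have := hk (i + -k)
      rw [show i + -k + k = i by ring] at this
      exact this.symm

end BiinfAux

/-- For finite words `u₁,v₁,w₁,u₂,v₂,w₂` all of the same positive length,
`u₁^{ω̄} v₁ w₁^{ω} = u₂^{ω̄} v₂ w₂^{ω}` (isomorphism of the `ℤ`-indexed colored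
linear orders) if and only if one of the four factor conditions holds. -/
theorem biinfinite_word_eq_iff_factor {S : Type*} [Inhabited S]
    (u₁ v₁ w₁ u₂ v₂ w₂ : List S) (n : ℕ) (hn : 0 < n)
    (hu₁ : u₁.length = n) (hv₁ : v₁.length = n) (hw₁ : w₁.length = n)
    (hu₂ : u₂.length = n) (hv₂ : v₂.length = n) (hw₂ : w₂.length = n) :
    (∃ e : ℤ ≃o ℤ, ∀ i : ℤ, biWord u₂ v₂ w₂ (e i) = biWord u₁ v₁ w₁ i) ↔
      (IsFactor (u₂ ++ v₂ ++ w₂ ++ w₂) (u₁ ++ u₁ ++ v₁ ++ w₁ ++ w₁) ∨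
       IsFactor (u₁ ++ v₁ ++ w₁ ++ w₁) (u₂ ++ u₂ ++ v₂ ++ w₂ ++ w₂) ∨
       (v₁ = w₁ ∧ u₂ = v₂ ∧ IsFactor (u₂ ++ w₂ ++ w₂) (u₁ ++ u₁ ++ w₁ ++ w₁)) ∨
       (u₁ = v₁ ∧ v₂ = w₂ ∧ IsFactor (u₁ ++ w₁ ++ w₁) (u₂ ++ u₂ ++ w₂ ++ w₂))) :=
  BiinfAux.main hn u₁ v₁ w₁ u₂ v₂ w₂ hu₁ hv₁ hw₁ hu₂ hv₂ hw₂
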